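/- Assume the presentation of the compact polytope Δ ⊆ ℝ^n is simple and exact. For I ⊆ {1,…,N} let C_I = {x ∈ ℝ^n : φ_i(x) ≤ λ_i for all i ∈ I} (so C_∅ = ℝ^n; when F_I is a nonempty face of Δ, C_I is the tangent cone of Δ along F_I). Then for every x ∈ ℝ^n, 𝟙_Δ(x) = Σ_{I ⊆ {1,…,N}, F_I ≠ ∅} (−1)^{n−|I|} · 𝟙_{C_I}(x), where 𝟙_S denotes the characteristic function of the set S and the sum is over all subsets I of {1,…,N} for which F_I is nonempty. -/

import Mathlib

noncomputable section

/-- The polytope `Δ = {x ∈ ℝⁿ : φ i x ≤ λ i for all i}` cut out by the linear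
functionals `φ i` and bounds `lam i`. -/
def polyDelta {n N : ℕ} (φ : Fin N → ((Fin n → ℝ) →ₗ[ℝ] ℝ)) (lam : Fin N → ℝ) :
    Set (Fin n → ℝ) :=
  {x | ∀ i, φ i x ≤ lam i}

/-- The face `F_I = {x ∈ Δ : φ i x = λ i for all i ∈ I}`. -/
def polyFace {n N : ℕ} (φ : Fin N → ((Fin n → ℝ) →ₗ[ℝ] ℝ)) (lam : Fin N → ℝ)
    (I : Finset (Fin N)) : Set (Fin n → ℝ) :=
  {x ∈ polyDelta φ lam | ∀ i ∈ I, φ i x = lam i}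

/-- The relative interior of the face `F_I`:
`{x ∈ Δ : φ i x = λ i for i ∈ I and φ j x < λ j for j ∉ I}`. -/
def polyRelint {n N : ℕ} (φ : Fin N → ((Fin n → ℝ) →ₗ[ℝ] ℝ)) (lam : Fin N → ℝ)
    (I : Finset (Fin N)) : Set (Fin n → ℝ) :=
  {x ∈ polyDelta φ lam | (∀ i ∈ I, φ i x = lam i) ∧ ∀ j ∉ I, φ j x < lam j}

/-- The presentation is *simple* if at every point of `Δ` the active functionals are
linearly independent. -/
def SimplePresentation {n N : ℕ} (φ : Fin N → ((Fin n → ℝ) →ₗ[ℝ] ℝ)) (lam : Fin N → ℝ) :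
    Prop :=
  ∀ x ∈ polyDelta φ lam,
    LinearIndependent ℝ (fun i : {i : Fin N // φ i x = lam i} => φ i.1)

/-- The presentation is *exact* if `relint F_I` is nonempty whenever `F_I` is nonempty. -/
def ExactPresentation {n N : ℕ} (φ : Fin N → ((Fin n → ℝ) →ₗ[ℝ] ℝ)) (lam : Fin N → ℝ) :
    Prop :=
  ∀ I : Finset (Fin N), (polyFace φ lam I).Nonempty → (polyRelint φ lam I).Nonempty

namespace BGaux

open Finset
open scoped Classical

variable {n N : ℕ}

/-- coefficient-vector-to-functional linear map -/
def TF : (Fin n → ℝ) →ₗ[ℝ] ((Fin n → ℝ) →ₗ[ℝ] ℝ) where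
  toFun w := ∑ j, w j • LinearMap.proj j
  map_add' a b := by
    simp only [Pi.add_apply, add_smul, Finset.sum_add_distrib]
  map_smul' r a := by
    simp only [Pi.smul_apply, smul_eq_mul, RingHom.id_apply, ← Finset.smul_sum, mul_smul]

lemma TF_apply (w x : Fin n → ℝ) : TF w x = ∑ j, w j * x j := by
  simp [TF, LinearMap.sum_apply]

lemma TF_surjective : Function.Surjective (TF (n := n)) := by
  intro ℓ
  refine ⟨fun j => ℓ (fun k => if j = k then 1 else 0), ?_⟩
  apply LinearMap.ext
  intro x
  rw [TF_apply]
  rw [LinearMap.pi_apply_eq_sum_univ ℓ x]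
  exact Finset.sum_congr rfl (fun j _ => by rw [smul_eq_mul, mul_comm])

lemma TF_bound (w x : Fin n → ℝ) : |TF w x| ≤ n * ‖w‖ * ‖x‖ := by
  rw [TF_apply]
  calc |∑ j, w j * x j| ≤ ∑ j, |w j * x j| := Finset.abs_sum_le_sum_abs _ _
    _ ≤ ∑ _j : Fin n, ‖w‖ * ‖x‖ := by
        refine Finset.sum_le_sum (fun j _ => ?_)
        rw [abs_mul]
        have h1 : |w j| ≤ ‖w‖ := by
          simpa [Real.norm_eq_abs] using norm_le_pi_norm w j
        have h2 : |x j| ≤ ‖x‖ := by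
          simpa [Real.norm_eq_abs] using norm_le_pi_norm x j
        exact mul_le_mul h1 h2 (abs_nonneg _) (norm_nonneg _)
    _ = n * ‖w‖ * ‖x‖ := by simp [Finset.sum_const, mul_assoc]

variable (φ : Fin N → ((Fin n → ℝ) →ₗ[ℝ] ℝ)) (lam : Fin N → ℝ)

/-- the set of generic coefficient vectors is dense -/


def act (y : Fin n → ℝ) : Finset (Fin N) := Finset.univ.filter (fun i => φ i y = lam i)

lemma mem_act {y : Fin n → ℝ} {i : Fin N} : i ∈ act φ lam y ↔ φ i y = lam i := by simp [act]

def spanF (S : Finset (Fin N)) : Submodule ℝ ((Fin n → ℝ) →ₗ[ℝ] ℝ) :=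
  Submodule.span ℝ (Set.range (fun s : {s // s ∈ S} => φ s.1))

lemma sum_pow_neg_one_powerset {α : Type*} [DecidableEq α] (B : Finset α) :
    ∑ K ∈ B.powerset, (-1 : ℝ) ^ K.card = if B = ∅ then 1 else 0 := by
  have h := Finset.sum_powerset_neg_one_pow_card (x := B)
  have : ((∑ K ∈ B.powerset, (-1 : ℤ) ^ K.card : ℤ) : ℝ)
      = ∑ K ∈ B.powerset, (-1 : ℝ) ^ K.card := by push_cast; rfl
  rw [← this, h]
  split_ifs <;> simp

/-- alternating sum over the interval `[P, B]` in the subset lattice -/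
lemma interval_alt_sum {α : Type*} [DecidableEq α] [Fintype α] (P B : Finset α) :
    ∑ I ∈ Finset.univ.filter (fun I : Finset α => P ⊆ I ∧ I ⊆ B), (-1 : ℝ) ^ I.card
      = if P = B then (-1 : ℝ) ^ P.card else 0 := by
  by_cases hPB : P ⊆ B
  · have hre : ∑ I ∈ Finset.univ.filter (fun I : Finset α => P ⊆ I ∧ I ⊆ B), (-1 : ℝ) ^ I.card
        = ∑ K ∈ (B \ P).powerset, (-1 : ℝ) ^ (K ∪ P).card := by
      refine (Finset.sum_nbij' (fun I => I \ P) (fun K => K ∪ P) ?_ ?_ ?_ ?_ ?_).symm.symm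
      · intro I hI
        simp only [Finset.mem_filter, Finset.mem_univ, true_and] at hI
        simp only [Finset.mem_powerset]
        exact Finset.sdiff_subset_sdiff hI.2 (Finset.Subset.refl _)
      · intro K hK
        simp only [Finset.mem_powerset] at hK
        simp only [Finset.mem_filter, Finset.mem_univ, true_and]
        constructor
        · exact Finset.subset_union_right
        · exact Finset.union_subset (hK.trans (Finset.sdiff_subset)) hPB
      · intro I hI
        simp only [Finset.mem_filter, Finset.mem_univ, true_and] at hI
        exact Finset.sdiff_union_of_subset hI.1
      · intro K hK
        simp only [Finset.mem_powerset] at hK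
        have hd : Disjoint K P := Finset.disjoint_of_subset_left hK Finset.sdiff_disjoint
        show (K ∪ P) \ P = K
        rw [Finset.union_sdiff_cancel_right hd]
      · intro I hI
        simp only [Finset.mem_filter, Finset.mem_univ, true_and] at hI
        rw [Finset.sdiff_union_of_subset hI.1]
    rw [hre]
    have hcard : ∀ K ∈ (B \ P).powerset, (-1 : ℝ) ^ (K ∪ P).card
        = (-1 : ℝ) ^ P.card * (-1 : ℝ) ^ K.card := by
      intro K hK
      simp only [Finset.mem_powerset] at hK
      have hd : Disjoint K P := Finset.disjoint_of_subset_left hK Finset.sdiff_disjoint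
      rw [Finset.card_union_of_disjoint hd, pow_add, mul_comm]
    rw [Finset.sum_congr rfl hcard, ← Finset.mul_sum, sum_pow_neg_one_powerset]
    simp only [Finset.sdiff_eq_empty_iff_subset]
    by_cases h : B ⊆ P
    · rw [if_pos h, if_pos (Finset.Subset.antisymm hPB h), mul_one]
    · rw [if_neg h, if_neg (fun he => h (by rw [he])), mul_zero]
  · rw [Finset.sum_eq_zero, if_neg (fun he => hPB (by rw [he]))]
    intro I hI
    simp only [Finset.mem_filter, Finset.mem_univ, true_and] at hI
    exact absurd (hI.1.trans hI.2) hPB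

lemma neg_one_pow_sub {k m : ℕ} (h : k ≤ m) :
    (-1 : ℝ) ^ (m - k) = (-1 : ℝ) ^ m * (-1 : ℝ) ^ k := by
  have : (-1 : ℝ) ^ (m - k) * ((-1 : ℝ) ^ k * (-1 : ℝ) ^ k) = (-1 : ℝ) ^ m * (-1 : ℝ) ^ k := by
    rw [← mul_assoc, ← pow_add, Nat.sub_add_cancel h]
  simpa [← mul_pow] using this


lemma mem_polyFace {I : Finset (Fin N)} {x : Fin n → ℝ} :
    x ∈ polyFace φ lam I ↔ x ∈ polyDelta φ lam ∧ ∀ i ∈ I, φ i x = lam i :=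
  Iff.rfl

lemma polyFace_empty : polyFace φ lam ∅ = polyDelta φ lam := by
  ext x; simp [mem_polyFace]

lemma act_subset_of_face {I : Finset (Fin N)} {x : Fin n → ℝ}
    (hx : x ∈ polyFace φ lam I) : I ⊆ act φ lam x := by
  intro i hi
  exact (mem_act φ lam).2 (hx.2 i hi)

/-- simplicity gives linear independence of the active functionals, subtype version -/
lemma indep_act
    (hsimple : ∀ x ∈ polyDelta φ lam,
      LinearIndependent ℝ (fun i : {i : Fin N // φ i x = lam i} => φ i.1))
    {y : Fin n → ℝ} (hy : y ∈ polyDelta φ lam) :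
    LinearIndependent ℝ (fun s : {s // s ∈ act φ lam y} => φ s.1) := by
  have h := hsimple y hy
  have : (fun s : {s // s ∈ act φ lam y} => φ s.1) =
      (fun i : {i : Fin N // φ i y = lam i} => φ i.1) ∘
        (fun s : {s // s ∈ act φ lam y} => (⟨s.1, (mem_act φ lam).1 s.2⟩ : {i // φ i y = lam i})) := rfl
  rw [this]
  refine h.comp _ (fun a b hab => ?_)
  rcases a with ⟨a, ha⟩; rcases b with ⟨b, hb⟩
  simpa using hab

lemma indep_subset {S T : Finset (Fin N)} (hTS : T ⊆ S)
    (h : LinearIndependent ℝ (fun s : {s // s ∈ S} => φ s.1)) :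
    LinearIndependent ℝ (fun s : {s // s ∈ T} => φ s.1) := by
  have : (fun s : {s // s ∈ T} => φ s.1) =
      (fun s : {s // s ∈ S} => φ s.1) ∘ (fun t : {s // s ∈ T} => (⟨t.1, hTS t.2⟩ : {s // s ∈ S})) := rfl
  rw [this]
  refine h.comp _ (fun a b hab => ?_)
  rcases a with ⟨a, ha⟩; rcases b with ⟨b, hb⟩
  simpa using hab

lemma finrank_dual : Module.finrank ℝ ((Fin n → ℝ) →ₗ[ℝ] ℝ) = n := by
  have h1 : Module.finrank ℝ (Module.Dual ℝ (Fin n → ℝ)) = Module.finrank ℝ (Fin n → ℝ) :=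
    Subspace.dual_finrank_eq
  have h2 : Module.finrank ℝ (Fin n → ℝ) = n := by simp
  exact h1.trans h2

lemma card_le_of_indep {S : Finset (Fin N)}
    (h : LinearIndependent ℝ (fun s : {s // s ∈ S} => φ s.1)) : S.card ≤ n := by
  have := h.fintype_card_le_finrank
  rwa [Fintype.card_coe, finrank_dual] at this

lemma card_of_span_top {S : Finset (Fin N)}
    (hind : LinearIndependent ℝ (fun s : {s // s ∈ S} => φ s.1))
    (hsp : spanF φ S = ⊤) : S.card = n := by
  have h1 : Module.finrank ℝ (spanF φ S) = Fintype.card {s // s ∈ S} :=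
    finrank_span_eq_card hind
  rw [hsp, finrank_top, finrank_dual, Fintype.card_coe] at h1
  omega



/-- perturbation staying in a face -/
lemma pert (hN : 0 < N) {y u : Fin n → ℝ} {I : Finset (Fin N)}
    (hy : y ∈ polyFace φ lam I)
    (hu1 : ∀ j ∈ act φ lam y, φ j u ≤ 0) (hu2 : ∀ i ∈ I, φ i u = 0) :
    ∃ ε : ℝ, 0 < ε ∧ y + ε • u ∈ polyFace φ lam I := by
  have : Nonempty (Fin N) := ⟨⟨0, hN⟩⟩
  set g : Fin N → ℝ := fun i =>
    if φ i u ≤ 0 then 1 else (lam i - φ i y) / (φ i u) with hg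
  have hgpos : ∀ i, 0 < g i := by
    intro i
    by_cases h : φ i u ≤ 0
    · simp [hg, h]
    · push_neg at h
      have hi : i ∉ act φ lam y := fun hi => absurd (hu1 i hi) (by linarith)
      have hlt : φ i y < lam i := lt_of_le_of_ne (hy.1 i) (fun he => hi ((mem_act φ lam).2 he))
      simp only [hg, if_neg (not_le.2 h)]
      exact div_pos (by linarith) h
  set ε : ℝ := Finset.univ.inf' Finset.univ_nonempty g with hε
  have hεpos : 0 < ε := by
    rw [hε, Finset.lt_inf'_iff]
    exact fun i _ => hgpos i
  refine ⟨ε, hεpos, ?_, ?_⟩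
  · intro i
    have hεg : ε ≤ g i := Finset.inf'_le _ (Finset.mem_univ i)
    have hφ : φ i (y + ε • u) = φ i y + ε * φ i u := by
      simp [map_add, map_smul, smul_eq_mul]
    rw [hφ]
    by_cases h : φ i u ≤ 0
    · nlinarith [hy.1 i]
    · push_neg at h
      have : ε ≤ (lam i - φ i y) / (φ i u) := by
        simpa [hg, if_neg (not_le.2 h)] using hεg
      have := (le_div_iff₀ h).1 this
      linarith
  · intro i hi
    have : φ i (y + ε • u) = φ i y + ε * φ i u := by simp [map_add, map_smul, smul_eq_mul]
    rw [this, hu2 i hi, hy.2 i hi]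
    ring

/-- at a minimiser, ℓ vanishes on directions killing the active functionals -/
lemma ell_vanish (hN : 0 < N) {ℓ : (Fin n → ℝ) →ₗ[ℝ] ℝ} {y : Fin n → ℝ} {I : Finset (Fin N)}
    (hy : y ∈ polyFace φ lam I) (hmin : IsMinOn ℓ (polyFace φ lam I) y)
    {u : Fin n → ℝ} (hu : ∀ j ∈ act φ lam y, φ j u = 0) : ℓ u = 0 := by
  have hI : ∀ i ∈ I, i ∈ act φ lam y := fun i hi => (mem_act φ lam).2 (hy.2 i hi)
  have h1 : ∀ v : Fin n → ℝ, (∀ j ∈ act φ lam y, φ j v = 0) → 0 ≤ ℓ v := by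
    intro v hv
    obtain ⟨ε, hε, hmem⟩ := pert φ lam hN hy (fun j hj => le_of_eq (hv j hj))
      (fun i hi => hv i (hI i hi))
    have h := hmin hmem
    have h' : ℓ y ≤ ℓ (y + ε • v) := h
    rw [map_add, map_smul, smul_eq_mul] at h'
    nlinarith
  have h2 := h1 u hu
  have h3 := h1 (-u) (fun j hj => by simp [hu j hj])
  simp only [map_neg] at h3
  linarith

/-- the optimality of the minimiser puts ℓ in the span of active functionals -/
lemma mem_spanF_act (hN : 0 < N) {ℓ : (Fin n → ℝ) →ₗ[ℝ] ℝ} {y : Fin n → ℝ}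
    {I : Finset (Fin N)}
    (hy : y ∈ polyFace φ lam I) (hmin : IsMinOn ℓ (polyFace φ lam I) y) :
    ℓ ∈ Submodule.span ℝ (Set.range (fun s : {s // s ∈ act φ lam y} => φ s.1)) := by
  apply mem_span_of_iInf_ker_le_ker (L := fun s : {s // s ∈ act φ lam y} => φ s.1)
  intro u hu
  simp only [Submodule.mem_iInf, LinearMap.mem_ker] at hu ⊢
  exact ell_vanish φ lam hN hy hmin (fun j hj => hu ⟨j, hj⟩)

/-- points are separated by a spanning family -/
lemma eq_of_forall_act {S : Finset (Fin N)}
    (hsp : Submodule.span ℝ (Set.range (fun s : {s // s ∈ S} => φ s.1)) = ⊤)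
    {y z : Fin n → ℝ} (h : ∀ s ∈ S, φ s y = φ s z) : y = z := by
  have hall : ∀ f : Module.Dual ℝ (Fin n → ℝ), f (y - z) = 0 := by
    intro f
    have hf : f ∈ Submodule.span ℝ (Set.range (fun s : {s // s ∈ S} => φ s.1)) := by
      rw [hsp]; trivial
    induction hf using Submodule.span_induction with
    | mem g hg => obtain ⟨s, rfl⟩ := hg; simp [map_sub, h s.1 s.2]
    | zero => simp
    | add g g' _ _ hg hg' => simp [hg, hg']
    | smul a g _ hg => simp [hg]
  have h0 := (Module.forall_dual_apply_eq_zero_iff ℝ (y - z)).1 hall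
  exact sub_eq_zero.1 h0



lemma generic_dense :
    Dense {w : Fin n → ℝ | ∀ T : Finset (Fin N), spanF φ T ≠ ⊤ → TF w ∉ spanF φ T} := by
  have : {w : Fin n → ℝ | ∀ T : Finset (Fin N), spanF φ T ≠ ⊤ → TF w ∉ spanF φ T}
      = ⋂ T : Finset (Fin N),
          (if spanF φ T ≠ ⊤ then (Submodule.comap TF (spanF φ T) : Set (Fin n → ℝ))ᶜ else Set.univ) := by
    ext w
    simp only [Set.mem_iInter, Set.mem_setOf_eq]
    constructor
    · intro h T
      split_ifs with hT
      · exact fun hw => h T hT hw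
      · trivial
    · intro h T hT
      have := h T
      rw [if_pos hT] at this
      exact this
  rw [this]
  apply dense_iInter_of_isOpen
  · intro T
    split_ifs with hT
    · exact (Submodule.closed_of_finiteDimensional _).isOpen_compl
    · exact isOpen_univ
  · intro T
    split_ifs with hT
    · -- complement of a proper submodule is dense
      have hne : (Submodule.comap TF (spanF φ T) : Submodule ℝ (Fin n → ℝ)) ≠ ⊤ := by
        intro he
        apply hT
        rw [eq_top_iff]
        intro ℓ _
        obtain ⟨w, rfl⟩ := TF_surjective ℓ
        have : w ∈ Submodule.comap TF (spanF φ T) := by rw [he]; trivial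
        exact this
      rw [← interior_eq_empty_iff_dense_compl]
      by_contra hne2
      exact hne (Submodule.eq_top_of_nonempty_interior' _
        (Set.nonempty_iff_ne_empty.2 hne2))
    · exact dense_univ


lemma polyDelta_convex : Convex ℝ (polyDelta φ lam) := by
  intro x hx y hy a b ha hb hab
  intro i
  have : φ i (a • x + b • y) = a * φ i x + b * φ i y := by
    simp [map_add, map_smul, smul_eq_mul]
  rw [this]
  calc a * φ i x + b * φ i y ≤ a * lam i + b * lam i := by
        apply add_le_add
        · exact mul_le_mul_of_nonneg_left (hx i) ha
        · exact mul_le_mul_of_nonneg_left (hy i) hb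
    _ = lam i := by rw [← add_mul, hab, one_mul]

lemma polyDelta_closed : IsClosed (polyDelta φ lam) := by
  have : polyDelta φ lam = ⋂ i, {x : Fin n → ℝ | φ i x ≤ lam i} := by
    ext x; simp [polyDelta]
  rw [this]
  exact isClosed_iInter (fun i =>
    isClosed_le (φ i).continuous_of_finiteDimensional continuous_const)

/-- existence of a generic functional, separating if `x₀ ∉ Δ` -/
lemma exists_generic (hcpt : IsCompact (polyDelta φ lam)) (x₀ : Fin n → ℝ) :
    ∃ ℓ : (Fin n → ℝ) →ₗ[ℝ] ℝ,
      (∀ T : Finset (Fin N), spanF φ T ≠ ⊤ → ℓ ∉ spanF φ T) ∧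
      (x₀ ∉ polyDelta φ lam → ∀ y ∈ polyDelta φ lam, ℓ y ≤ ℓ x₀) := by
  by_cases hx : x₀ ∈ polyDelta φ lam
  · obtain ⟨w, hw⟩ := (generic_dense φ).nonempty
    exact ⟨TF w, hw, fun h => absurd hx h⟩
  · -- separate x₀ from Δ
    obtain ⟨f, u, hfu, hux⟩ := geometric_hahn_banach_closed_point
      (polyDelta_convex φ lam) (polyDelta_closed φ lam) hx
    -- coefficient vector of f
    set w₀ : Fin n → ℝ := fun j => f (fun k => if j = k then 1 else 0) with hw₀
    have hfw₀ : ∀ z, TF w₀ z = f z := by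
      intro z
      rw [TF_apply]
      rw [show (f z = ∑ i, z i • f fun j => if i = j then 1 else 0) from
        LinearMap.pi_apply_eq_sum_univ (f : (Fin n → ℝ) →ₗ[ℝ] ℝ) z]
      exact Finset.sum_congr rfl (fun j _ => by rw [smul_eq_mul, mul_comm])
    -- bound points of Δ and x₀
    obtain ⟨R, hR⟩ := hcpt.exists_bound_of_continuousOn continuousOn_id
    set R' : ℝ := max R ‖x₀‖ + 1 with hR'
    have hR'pos : 0 < R' := by
      have : (0:ℝ) ≤ ‖x₀‖ := norm_nonneg _
      have : ‖x₀‖ ≤ max R ‖x₀‖ := le_max_right _ _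
      nlinarith [norm_nonneg x₀]
    have hRy : ∀ y ∈ polyDelta φ lam, ‖y‖ ≤ R' := by
      intro y hy
      have := hR y hy
      simp only [id] at this
      have : ‖y‖ ≤ max R ‖x₀‖ := le_trans this (le_max_left _ _)
      linarith
    have hRx : ‖x₀‖ ≤ R' := by
      have : ‖x₀‖ ≤ max R ‖x₀‖ := le_max_right _ _
      linarith
    set δ : ℝ := (f x₀ - u) / (2 * (n * R' + 1)) with hδ
    have hδpos : 0 < δ := by
      apply div_pos (by linarith) (by positivity)
    obtain ⟨w, hwD, hwball⟩ := (generic_dense φ).exists_mem_open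
      (Metric.isOpen_ball (x := w₀) (ε := δ)) (Metric.nonempty_ball.2 hδpos)
    refine ⟨TF w, hwD, fun _ y hy => ?_⟩
    clear_value δ R'
    have hdist : ‖w - w₀‖ < δ := by
      rw [← dist_eq_norm]
      exact Metric.mem_ball.1 hwball
    have hkey : ∀ z : Fin n → ℝ, ‖z‖ ≤ R' → |TF w z - f z| ≤ n * δ * R' := by
      intro z hz
      have h1 : TF w z - f z = TF (w - w₀) z := by
        rw [map_sub, LinearMap.sub_apply, hfw₀]
      rw [h1]
      calc |TF (w - w₀) z| ≤ n * ‖w - w₀‖ * ‖z‖ := TF_bound _ _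
        _ ≤ n * δ * R' := by
            apply mul_le_mul
            · apply mul_le_mul_of_nonneg_left (le_of_lt hdist) (by positivity)
            · exact hz
            · exact norm_nonneg _
            · positivity
    have hbound : n * δ * R' < (f x₀ - u) / 2 := by
      rw [hδ]
      have hpos : (0:ℝ) < 2 * ((n:ℝ) * R' + 1) := by positivity
      have hfxu : 0 < f x₀ - u := by linarith
      have h1 : (n:ℝ) * ((f x₀ - u) / (2 * ((n:ℝ) * R' + 1))) * R'
          = (f x₀ - u) * (((n:ℝ) * R') / (2 * ((n:ℝ) * R' + 1))) := by
        field_simp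
      rw [h1]
      have h2 : ((n:ℝ) * R') / (2 * ((n:ℝ) * R' + 1)) < 1 / 2 := by
        rw [div_lt_div_iff₀ hpos (by norm_num : (0:ℝ) < 2)]
        nlinarith [hR'pos]
      calc (f x₀ - u) * (((n:ℝ) * R') / (2 * ((n:ℝ) * R' + 1)))
          < (f x₀ - u) * (1/2) := by
            exact mul_lt_mul_of_pos_left h2 hfxu
        _ = (f x₀ - u) / 2 := by ring
    have hy1 : TF w y ≤ f y + n * δ * R' := by
      have ha := abs_le.1 (hkey y (hRy y hy))
      linarith [ha.2]
    have hy2 : f x₀ - n * δ * R' ≤ TF w x₀ := by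
      have hb := abs_le.1 (hkey x₀ hRx)
      linarith [hb.1]
    have hfy : f y < u := hfu y hy
    have hstep : TF w y ≤ u + (f x₀ - u)/2 := by linarith
    have hstep2 : f x₀ - (f x₀ - u)/2 ≤ TF w x₀ := by linarith
    linarith



lemma exists_coeffs {S : Finset (Fin N)} (ℓ : (Fin n → ℝ) →ₗ[ℝ] ℝ)
    (hsp : spanF φ S = ⊤) : ∃ c : Fin N → ℝ, ℓ = ∑ s ∈ S, c s • φ s := by
  have hℓ : ℓ ∈ Submodule.span ℝ (Set.range (fun s : {s // s ∈ S} => φ s.1)) := by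
    rw [show Submodule.span ℝ (Set.range (fun s : {s // s ∈ S} => φ s.1)) = ⊤ from hsp]
    trivial
  obtain ⟨c', hc'⟩ := (Submodule.mem_span_range_iff_exists_fun ℝ).1 hℓ
  refine ⟨fun i => if h : i ∈ S then c' ⟨i, h⟩ else 0, ?_⟩
  rw [← hc']
  rw [← Finset.sum_coe_sort S (fun s => (if h : s ∈ S then c' ⟨s, h⟩ else 0) • φ s)]
  apply Finset.sum_congr rfl
  intro s _
  rw [dif_pos s.2]

lemma coeffs_unique {S : Finset (Fin N)}
    (hind : LinearIndependent ℝ (fun s : {s // s ∈ S} => φ s.1))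
    {c d : Fin N → ℝ} (h : ∑ s ∈ S, c s • φ s = ∑ s ∈ S, d s • φ s) :
    ∀ s ∈ S, c s = d s := by
  intro s hs
  have hz : ∑ t : {s // s ∈ S}, (c t.1 - d t.1) • φ t.1 = 0 := by
    rw [Finset.sum_coe_sort S (fun t => (c t - d t) • φ t)]
    rw [Finset.sum_congr rfl (fun i _ => sub_smul (c i) (d i) (φ i)), Finset.sum_sub_distrib, h, sub_self]
  have h1 := linearIndependent_iff'.1 hind Finset.univ (fun t => c t.1 - d t.1) hz
    ⟨s, hs⟩ (Finset.mem_univ _)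
  have h2 : c s - d s = 0 := by simpa using h1
  linarith

lemma exists_dual_vec {S : Finset (Fin N)}
    (hind : LinearIndependent ℝ (fun s : {s // s ∈ S} => φ s.1))
    (hsp : spanF φ S = ⊤)
    {j : Fin N} (hj : j ∈ S) :
    ∃ u : Fin n → ℝ, φ j u = 1 ∧ ∀ t ∈ S, t ≠ j → φ t u = 0 := by
  have hsp' : Submodule.span ℝ (Set.range (fun s : {s // s ∈ S} => φ s.1)) = ⊤ := hsp
  let B : Module.Basis {s // s ∈ S} ℝ (Module.Dual ℝ (Fin n → ℝ)) := Module.Basis.mk hind (by rw [hsp'])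
  let u : Fin n → ℝ := (Module.evalEquiv ℝ (Fin n → ℝ)).symm (B.dualBasis ⟨j, hj⟩)
  have key : ∀ (t : Fin N) (ht : t ∈ S),
      φ t u = if (⟨t, ht⟩ : {s // s ∈ S}) = ⟨j, hj⟩ then 1 else 0 := by
    intro t ht
    have h1 : φ t u = (B.dualBasis ⟨j, hj⟩) (φ t) :=
      Module.apply_evalEquiv_symm_apply ℝ (Fin n → ℝ) (φ t) (B.dualBasis ⟨j, hj⟩)
    have h2 : φ t = B ⟨t, ht⟩ := by simp [B, Module.Basis.mk_apply]
    rw [h1, h2, Module.Basis.dualBasis_apply_self]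
  refine ⟨u, ?_, ?_⟩
  · have := key j hj; simpa using this
  · intro t ht htj
    have := key t ht
    rw [if_neg (by simp [htj])] at this
    exact this

/-- evaluation of a represented functional -/
lemma rep_apply {S : Finset (Fin N)} {ℓ : (Fin n → ℝ) →ₗ[ℝ] ℝ} {c : Fin N → ℝ}
    (hrep : ℓ = ∑ s ∈ S, c s • φ s) (z : Fin n → ℝ) :
    ℓ z = ∑ s ∈ S, c s * φ s z := by
  rw [hrep]
  simp [LinearMap.sum_apply]

/-- sign of the coefficients at a face minimiser -/
lemma coeff_nonpos (hN : 0 < N) {ℓ : (Fin n → ℝ) →ₗ[ℝ] ℝ} {y : Fin n → ℝ}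
    {I : Finset (Fin N)} (hy : y ∈ polyFace φ lam I)
    (hmin : IsMinOn ℓ (polyFace φ lam I) y)
    {c : Fin N → ℝ} (hrep : ℓ = ∑ s ∈ act φ lam y, c s • φ s)
    (hind : LinearIndependent ℝ (fun s : {s // s ∈ act φ lam y} => φ s.1))
    (hsp : spanF φ (act φ lam y) = ⊤)
    {j : Fin N} (hj : j ∈ act φ lam y) (hjI : j ∉ I) : c j ≤ 0 := by
  obtain ⟨u, hu1, hu2⟩ := exists_dual_vec φ hind hsp hj
  have hmemu : ∀ t ∈ act φ lam y, φ t (-u) ≤ 0 := by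
    intro t ht
    by_cases htj : t = j
    · subst htj; rw [map_neg, hu1]; norm_num
    · rw [map_neg, hu2 t ht htj]; norm_num
  have hI0 : ∀ i ∈ I, φ i (-u) = 0 := by
    intro i hi
    have hiact : i ∈ act φ lam y := (mem_act φ lam).2 (hy.2 i hi)
    have : i ≠ j := fun he => hjI (he ▸ hi)
    rw [map_neg, hu2 i hiact this, neg_zero]
  obtain ⟨ε, hε, hmem⟩ := pert φ lam hN hy hmemu hI0
  have hle : ℓ y ≤ ℓ (y + ε • (-u)) := hmin hmem
  rw [map_add, map_smul, smul_eq_mul] at hle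
  have hlu : ℓ (-u) = -c j := by
    rw [rep_apply φ hrep]
    rw [Finset.sum_eq_single j]
    · rw [map_neg, hu1]; ring
    · intro t ht htj; rw [map_neg, hu2 t ht htj]; ring
    · intro h; exact absurd hj h
  rw [hlu] at hle
  nlinarith

/-- genericity makes all coefficients nonzero -/
lemma coeff_nonzero {ℓ : (Fin n → ℝ) →ₗ[ℝ] ℝ}
    (hgen : ∀ T : Finset (Fin N), spanF φ T ≠ ⊤ → ℓ ∉ spanF φ T)
    {S : Finset (Fin N)}
    (hind : LinearIndependent ℝ (fun s : {s // s ∈ S} => φ s.1))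
    (hsp : spanF φ S = ⊤)
    {c : Fin N → ℝ} (hrep : ℓ = ∑ s ∈ S, c s • φ s)
    {j : Fin N} (hj : j ∈ S) : c j ≠ 0 := by
  intro hc0
  have hcard : S.card = n := card_of_span_top φ hind hsp
  have hindE : LinearIndependent ℝ (fun s : {s // s ∈ S.erase j} => φ s.1) :=
    indep_subset φ (Finset.erase_subset j S) hind
  have hne : spanF φ (S.erase j) ≠ ⊤ := by
    intro htop
    have := card_of_span_top φ hindE htop
    have hcards : (S.erase j).card = S.card - 1 := Finset.card_erase_of_mem hj
    have hpos : 0 < S.card := Finset.card_pos.2 ⟨j, hj⟩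
    omega
  apply hgen _ hne
  have hsum : ℓ = ∑ s ∈ S.erase j, c s • φ s := by
    rw [hrep, ← Finset.sum_erase S (by rw [hc0, zero_smul])]
  rw [hsum]
  apply Submodule.sum_mem
  intro s hs
  exact Submodule.smul_mem _ _ (Submodule.subset_span ⟨⟨s, hs⟩, rfl⟩)

/-- the structure of a nonempty fiber of the minimiser-active-set map -/
lemma fiber_structure (hN : 0 < N) (hsimple : SimplePresentation φ lam)
    {ℓ : (Fin n → ℝ) →ₗ[ℝ] ℝ}
    (hgen : ∀ T : Finset (Fin N), spanF φ T ≠ ⊤ → ℓ ∉ spanF φ T)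
    (A S : Finset (Fin N))
    (mfun : ∀ I : Finset (Fin N), (polyFace φ lam I).Nonempty → (Fin n → ℝ))
    (hmmem : ∀ I h, mfun I h ∈ polyFace φ lam I)
    (hmmin : ∀ I h, IsMinOn ℓ (polyFace φ lam I) (mfun I h))
    (σ : Finset (Fin N) → Finset (Fin N))
    (hσ : ∀ I (h : (polyFace φ lam I).Nonempty), σ I = act φ lam (mfun I h))
    (hfib : ∃ I, ((polyFace φ lam I).Nonempty ∧ I ⊆ A) ∧ σ I = S) :
    ∃ (m : Fin n → ℝ) (c : Fin N → ℝ),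
      m ∈ polyDelta φ lam ∧ act φ lam m = S ∧ S.card = n ∧ spanF φ S = ⊤ ∧
      LinearIndependent ℝ (fun s : {s // s ∈ S} => φ s.1) ∧
      (ℓ = ∑ s ∈ S, c s • φ s) ∧ (∀ s ∈ S, c s ≠ 0) ∧
      ∃ P : Finset (Fin N), (∀ s, s ∈ P ↔ s ∈ S ∧ 0 < c s) ∧
      (∀ I : Finset (Fin N),
        (((polyFace φ lam I).Nonempty ∧ I ⊆ A) ∧ σ I = S) ↔
          (P ⊆ I ∧ I ⊆ S ∩ A)) := by
  obtain ⟨I₀, ⟨hI₀ne, hI₀A⟩, hI₀σ⟩ := hfib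
  set m := mfun I₀ hI₀ne with hm
  have hmface : m ∈ polyFace φ lam I₀ := hmmem I₀ hI₀ne
  have hmΔ : m ∈ polyDelta φ lam := hmface.1
  have hactm : act φ lam m = S := by rw [← hI₀σ, hσ I₀ hI₀ne]
  have hspan : spanF φ S = ⊤ := by
    by_contra hne
    exact hgen S hne (by rw [← hactm]; exact mem_spanF_act φ lam hN hmface (hmmin I₀ hI₀ne))
  have hind : LinearIndependent ℝ (fun s : {s // s ∈ S} => φ s.1) := by
    rw [← hactm]; exact indep_act φ lam hsimple hmΔ
  have hcard : S.card = n := card_of_span_top φ hind hspan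
  obtain ⟨c, hrep⟩ := exists_coeffs φ ℓ hspan
  have hc0 : ∀ s ∈ S, c s ≠ 0 := fun s hs => coeff_nonzero φ hgen hind hspan hrep hs
  have hmS : ∀ s ∈ S, φ s m = lam s := by
    intro s hs
    exact (mem_act φ lam).1 (hactm ▸ hs)
  refine ⟨m, c, hmΔ, hactm, hcard, hspan, hind, hrep, hc0,
    S.filter (fun s => 0 < c s), fun s => by simp [Finset.mem_filter], ?_⟩
  intro I
  constructor
  · rintro ⟨⟨hIne, hIA⟩, hIσ⟩
    set mI := mfun I hIne with hmI
    have hmIface : mI ∈ polyFace φ lam I := hmmem I hIne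
    have hactmI : act φ lam mI = S := by rw [← hIσ, hσ I hIne]
    have hmIeq : mI = m :=
      eq_of_forall_act φ hspan (fun s hs => by
        rw [(mem_act φ lam).1 (hactmI ▸ hs), hmS s hs])
    have hIS : I ⊆ S := by
      intro i hi
      rw [← hactmI]
      exact (mem_act φ lam).2 (hmIface.2 i hi)
    constructor
    · -- positive coefficients are in I
      intro j hjP
      rw [Finset.mem_filter] at hjP
      obtain ⟨hjS, hjpos⟩ := hjP
      by_contra hjI
      have hrep' : ℓ = ∑ s ∈ act φ lam mI, c s • φ s := by rw [hactmI]; exact hrep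
      have hind' : LinearIndependent ℝ (fun s : {s // s ∈ act φ lam mI} => φ s.1) := by
        rw [hactmI]; exact hind
      have hsp' : spanF φ (act φ lam mI) = ⊤ := by rw [hactmI]; exact hspan
      have := coeff_nonpos φ lam hN hmIface (hmmin I hIne) hrep' hind' hsp'
        (by rw [hactmI]; exact hjS) hjI
      linarith
    · exact fun i hi => Finset.mem_inter.2 ⟨hIS hi, hIA hi⟩
  · rintro ⟨hPI, hISA⟩
    have hIS : I ⊆ S := fun i hi => (Finset.mem_inter.1 (hISA hi)).1
    have hIA : I ⊆ A := fun i hi => (Finset.mem_inter.1 (hISA hi)).2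
    have hmFI : m ∈ polyFace φ lam I := ⟨hmΔ, fun i hi => hmS i (hIS hi)⟩
    have hIne : (polyFace φ lam I).Nonempty := ⟨m, hmFI⟩
    refine ⟨⟨hIne, hIA⟩, ?_⟩
    -- m is the strict minimiser on F_I
    have hterm : ∀ y ∈ polyFace φ lam I, ∀ s ∈ S, 0 ≤ c s * (φ s y - lam s) := by
      intro y hy s hs
      by_cases hsI : s ∈ I
      · rw [hy.2 s hsI]; simp
      · have hcneg : c s < 0 := by
          have : s ∉ S.filter (fun s => 0 < c s) := fun hmem => hsI (hPI hmem)
          rw [Finset.mem_filter] at this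
          push_neg at this
          rcases lt_or_eq_of_le (this hs) with h | h
          · exact h
          · exact absurd h (hc0 s hs)
        have : φ s y ≤ lam s := hy.1 s
        nlinarith
    have hdiff : ∀ y : Fin n → ℝ, ℓ y - ℓ m = ∑ s ∈ S, c s * (φ s y - lam s) := by
      intro y
      rw [rep_apply φ hrep, rep_apply φ hrep]
      rw [← Finset.sum_sub_distrib]
      apply Finset.sum_congr rfl
      intro s hs
      rw [hmS s hs]
      ring
    set mI := mfun I hIne with hmI
    have hmIface : mI ∈ polyFace φ lam I := hmmem I hIne
    have h1 : ℓ mI ≤ ℓ m := hmmin I hIne hmFI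
    have h2 : 0 ≤ ℓ mI - ℓ m := by
      rw [hdiff]
      exact Finset.sum_nonneg (hterm mI hmIface)
    have hzero : ∑ s ∈ S, c s * (φ s mI - lam s) = 0 := by
      rw [← hdiff]; linarith
    have hall : ∀ s ∈ S, c s * (φ s mI - lam s) = 0 :=
      (Finset.sum_eq_zero_iff_of_nonneg (hterm mI hmIface)).1 hzero
    have hmIm : mI = m := by
      apply eq_of_forall_act φ hspan
      intro s hs
      have := hall s hs
      rcases mul_eq_zero.1 this with h | h
      · exact absurd h (hc0 s hs)
      · rw [hmS s hs]; linarith [sub_eq_zero.1 h]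
    rw [hσ I hIne, ← hmI, hmIm, hactm]


end BGaux

open scoped Classical

set_option maxHeartbeats 2000000 in
/-- **Brianchon–Gram decomposition (equation (6.2)).**  Let `Δ ⊆ ℝⁿ` be a compact
polytope with nonempty interior whose presentation is simple and exact, and for
`I ⊆ {1,…,N}` let `C_I = {x : φ i x ≤ λ i for i ∈ I}` (the tangent cone of `Δ` along
the face `F_I`).  Then the characteristic function of `Δ` equals the signed sum, over
all `I` with `F_I` nonempty, of `(-1)^{n-|I|}` times the characteristic function of
`C_I`. -/
theorem brianchon_gram_indicator
    {n N : ℕ} (hn : 0 < n) (hN : 0 < N)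
    (φ : Fin N → ((Fin n → ℝ) →ₗ[ℝ] ℝ)) (lam : Fin N → ℝ)
    (hcpt : IsCompact (polyDelta φ lam))
    (hint : (interior (polyDelta φ lam)).Nonempty)
    (hsimple : SimplePresentation φ lam)
    (hexact : ExactPresentation φ lam) :
    ∀ x : Fin n → ℝ,
      Set.indicator (polyDelta φ lam) (fun _ => (1 : ℝ)) x =
        ∑ I : Finset (Fin N),
          if (polyFace φ lam I).Nonempty then
            (-1 : ℝ) ^ (n - I.card) *
              Set.indicator {y : Fin n → ℝ | ∀ i ∈ I, φ i y ≤ lam i}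
                (fun _ => (1 : ℝ)) x
          else 0 := by
  intro x₀
  classical
  set A : Finset (Fin N) := Finset.univ.filter (fun i => φ i x₀ ≤ lam i) with hA
  have hmemA : ∀ i : Fin N, i ∈ A ↔ φ i x₀ ≤ lam i := fun i => by simp [hA]
  obtain ⟨ℓ, hgen, hsep⟩ := BGaux.exists_generic φ lam hcpt x₀
  -- compactness of the faces
  have hFclosed : ∀ I : Finset (Fin N), IsClosed (polyFace φ lam I) := by
    intro I
    have hrepr : polyFace φ lam I
        = polyDelta φ lam ∩ {x : Fin n → ℝ | ∀ i ∈ I, φ i x = lam i} := rfl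
    rw [hrepr]
    apply IsClosed.inter (BGaux.polyDelta_closed φ lam)
    have : {x : Fin n → ℝ | ∀ i ∈ I, φ i x = lam i}
        = ⋂ i ∈ (I : Set (Fin N)), {x : Fin n → ℝ | φ i x = lam i} := by
      ext x; simp
    rw [this]
    exact isClosed_biInter (fun i _ =>
      isClosed_eq (φ i).continuous_of_finiteDimensional continuous_const)
  have hFcpt : ∀ I : Finset (Fin N), IsCompact (polyFace φ lam I) := fun I =>
    hcpt.of_isClosed_subset (hFclosed I) (fun x hx => hx.1)
  have hminex : ∀ I : Finset (Fin N), (polyFace φ lam I).Nonempty →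
      ∃ y, y ∈ polyFace φ lam I ∧ IsMinOn ℓ (polyFace φ lam I) y := by
    intro I h
    obtain ⟨y, hy1, hy2⟩ := (hFcpt I).exists_isMinOn h
      (ℓ.continuous_of_finiteDimensional).continuousOn
    exact ⟨y, hy1, hy2⟩
  choose mfun hmmem hmmin using hminex
  set σ : Finset (Fin N) → Finset (Fin N) := fun I =>
    if h : (polyFace φ lam I).Nonempty then BGaux.act φ lam (mfun I h) else ∅ with hσdef
  have hσ : ∀ (I : Finset (Fin N)) (h : (polyFace φ lam I).Nonempty),
      σ I = BGaux.act φ lam (mfun I h) := fun I h => by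
    rw [hσdef]; exact dif_pos h
  -- rewrite the right-hand side
  have hRHS : (∑ I : Finset (Fin N), if (polyFace φ lam I).Nonempty then
        (-1:ℝ)^(n - I.card) *
          Set.indicator {y : Fin n → ℝ | ∀ i ∈ I, φ i y ≤ lam i} (fun _ => (1:ℝ)) x₀ else 0)
      = ∑ I ∈ Finset.univ.filter
          (fun I : Finset (Fin N) => (polyFace φ lam I).Nonempty ∧ I ⊆ A),
          (-1:ℝ)^(n - I.card) := by
    rw [Finset.sum_filter]
    apply Finset.sum_congr rfl
    intro I _
    by_cases h1 : (polyFace φ lam I).Nonempty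
    · by_cases h2 : I ⊆ A
      · have hx : x₀ ∈ {y : Fin n → ℝ | ∀ i ∈ I, φ i y ≤ lam i} :=
          fun i hi => (hmemA i).1 (h2 hi)
        simp [h1, h2, Set.indicator_of_mem hx]
      · have hx : x₀ ∉ {y : Fin n → ℝ | ∀ i ∈ I, φ i y ≤ lam i} := by
          intro hx
          exact h2 (fun i hi => (hmemA i).2 (hx i hi))
        simp [h1, h2, Set.indicator_of_notMem hx]
    · simp [h1]
  rw [hRHS]
  set 𝒮 := Finset.univ.filter
    (fun I : Finset (Fin N) => (polyFace φ lam I).Nonempty ∧ I ⊆ A) with h𝒮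
  have hIcard : ∀ I ∈ 𝒮, I.card ≤ n := by
    intro I hI
    rw [h𝒮, Finset.mem_filter] at hI
    obtain ⟨y, hy⟩ := hI.2.1
    have hsub : I ⊆ BGaux.act φ lam y := fun i hi => (BGaux.mem_act φ lam).2 (hy.2 i hi)
    calc I.card ≤ (BGaux.act φ lam y).card := Finset.card_le_card hsub
      _ ≤ n := BGaux.card_le_of_indep φ (BGaux.indep_act φ lam hsimple hy.1)
  have hsign : ∑ I ∈ 𝒮, (-1:ℝ)^(n - I.card) = (-1:ℝ)^n * ∑ I ∈ 𝒮, (-1:ℝ)^I.card := by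
    rw [Finset.mul_sum]
    exact Finset.sum_congr rfl (fun I hI => BGaux.neg_one_pow_sub (hIcard I hI))
  rw [hsign, ← Finset.sum_fiberwise 𝒮 σ (fun I => (-1:ℝ)^I.card)]
  -- a helper giving the structure of nonempty fibers
  have hfibstr : ∀ S : Finset (Fin N), (𝒮.filter (fun I => σ I = S)).Nonempty →
      ∃ (m : Fin n → ℝ) (c : Fin N → ℝ),
        m ∈ polyDelta φ lam ∧ BGaux.act φ lam m = S ∧ S.card = n ∧
        BGaux.spanF φ S = ⊤ ∧
        LinearIndependent ℝ (fun s : {s // s ∈ S} => φ s.1) ∧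
        (ℓ = ∑ s ∈ S, c s • φ s) ∧ (∀ s ∈ S, c s ≠ 0) ∧
        ∃ P : Finset (Fin N), (∀ s, s ∈ P ↔ s ∈ S ∧ 0 < c s) ∧
        (𝒮.filter (fun I => σ I = S)
          = Finset.univ.filter (fun I => P ⊆ I ∧ I ⊆ S ∩ A)) := by
    intro S hfe
    obtain ⟨I₁, hI₁⟩ := hfe
    have hI₁' : ((polyFace φ lam I₁).Nonempty ∧ I₁ ⊆ A) ∧ σ I₁ = S := by
      rw [h𝒮] at hI₁
      simpa using hI₁
    obtain ⟨m, c, h1, h2, h3, h4, h5, h6, h7, P, hPmem, h8⟩ :=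
      BGaux.fiber_structure φ lam hN hsimple hgen A S mfun hmmem hmmin σ hσ ⟨I₁, hI₁'⟩
    refine ⟨m, c, h1, h2, h3, h4, h5, h6, h7, P, hPmem, ?_⟩
    ext I
    rw [h𝒮]
    simp only [Finset.filter_filter, Finset.mem_filter, Finset.mem_univ, true_and]
    rw [← h8 I]
  by_cases hx : x₀ ∈ polyDelta φ lam
  · -- the polytope case
    have hAuniv : A = Finset.univ :=
      Finset.eq_univ_of_forall (fun i => (hmemA i).2 (hx i))
    -- maximiser of ℓ over Δ
    obtain ⟨ystar, hyΔ, hymax⟩ := hcpt.exists_isMinOn ⟨x₀, hx⟩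
      ((-ℓ).continuous_of_finiteDimensional).continuousOn
    have hyface : ystar ∈ polyFace φ lam (∅ : Finset (Fin N)) := by
      rw [BGaux.polyFace_empty]; exact hyΔ
    have hymax' : IsMinOn (-ℓ) (polyFace φ lam (∅ : Finset (Fin N))) ystar := by
      rw [BGaux.polyFace_empty]; exact hymax
    set S₀ := BGaux.act φ lam ystar with hS₀
    have hgen' : ∀ T : Finset (Fin N), BGaux.spanF φ T ≠ ⊤ → -ℓ ∉ BGaux.spanF φ T := by
      intro T hT h
      have : ℓ ∈ BGaux.spanF φ T := by
        have := Submodule.neg_mem _ h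
        simpa using this
      exact hgen T hT this
    have hspan₀ : BGaux.spanF φ S₀ = ⊤ := by
      by_contra hne
      exact hgen' S₀ hne (BGaux.mem_spanF_act φ lam hN hyface hymax')
    have hind₀ : LinearIndependent ℝ (fun s : {s // s ∈ S₀} => φ s.1) :=
      BGaux.indep_act φ lam hsimple hyΔ
    have hcard₀ : S₀.card = n := BGaux.card_of_span_top φ hind₀ hspan₀
    obtain ⟨d, hd⟩ := BGaux.exists_coeffs φ (-ℓ) hspan₀
    have hdneg : ∀ s ∈ S₀, d s < 0 := by
      intro s hs
      have h1 : d s ≤ 0 := BGaux.coeff_nonpos φ lam hN hyface hymax' hd hind₀ hspan₀ hs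
        (Finset.notMem_empty s)
      have h2 : d s ≠ 0 := BGaux.coeff_nonzero φ hgen' hind₀ hspan₀ hd hs
      exact lt_of_le_of_ne h1 h2
    have hrepℓ : ℓ = ∑ s ∈ S₀, (-d s) • φ s := by
      have h1 : ℓ = -(-ℓ) := (neg_neg ℓ).symm
      rw [h1, hd, ← Finset.sum_neg_distrib]
      exact Finset.sum_congr rfl (fun s _ => (neg_smul (d s) (φ s)).symm)
    have hystarS₀ : ∀ s ∈ S₀, φ s ystar = lam s := fun s hs => (BGaux.mem_act φ lam).1 hs
    have hsingle : (∑ S : Finset (Fin N),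
        ∑ I ∈ 𝒮.filter (fun I => σ I = S), (-1:ℝ)^I.card) = (-1:ℝ)^n := by
      rw [Finset.sum_eq_single S₀]
      · -- value at S₀
        have hfe : (𝒮.filter (fun I => σ I = S₀)).Nonempty := by
          refine ⟨S₀, ?_⟩
          have hS₀face : ystar ∈ polyFace φ lam S₀ := ⟨hyΔ, hystarS₀⟩
          have hS₀ne : (polyFace φ lam S₀).Nonempty := ⟨ystar, hS₀face⟩
          have hσS₀ : σ S₀ = S₀ := by
            rw [hσ S₀ hS₀ne]
            have hmm := hmmem S₀ hS₀ne
            have : mfun S₀ hS₀ne = ystar :=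
              BGaux.eq_of_forall_act φ hspan₀ (fun s hs => by
                rw [hmm.2 s hs, hystarS₀ s hs])
            rw [this]
          rw [Finset.mem_filter, h𝒮, Finset.mem_filter]
          exact ⟨⟨Finset.mem_univ _, hS₀ne, hAuniv ▸ Finset.subset_univ S₀⟩, hσS₀⟩
        obtain ⟨m, c, hmΔ, hactm, hcardS, hspanS, hindS, hrepc, hc0, P, hPmem, hsets⟩ :=
          hfibstr S₀ hfe
        have hmy : m = ystar :=
          BGaux.eq_of_forall_act φ hspan₀ (fun s hs => by
            rw [(BGaux.mem_act φ lam).1 (hactm ▸ hs), hystarS₀ s hs])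
        have hcd : ∀ s ∈ S₀, c s = -d s :=
          BGaux.coeffs_unique φ hind₀ (by rw [← hrepc, ← hrepℓ])
        have hcpos : ∀ s ∈ S₀, 0 < c s := by
          intro s hs
          rw [hcd s hs]
          linarith [hdneg s hs]
        have hP : P = S₀ := by
          ext s
          rw [hPmem s]
          exact ⟨fun h => h.1, fun h => ⟨h, hcpos s h⟩⟩
        rw [hsets, BGaux.interval_alt_sum, hP, hAuniv, Finset.inter_univ, if_pos rfl,
          hcard₀]
      · -- other fibers vanish
        intro S _ hSne
        by_cases hfe : (𝒮.filter (fun I => σ I = S)).Nonempty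
        · obtain ⟨m, c, hmΔ, hactm, hcardS, hspanS, hindS, hrepc, hc0, P, hPmem, hsets⟩ :=
            hfibstr S hfe
          rw [hsets, BGaux.interval_alt_sum]
          rw [if_neg]
          intro hPS
          rw [hAuniv, Finset.inter_univ] at hPS
          have hcpos : ∀ s ∈ S, 0 < c s := by
            intro s hs
            have hsP : s ∈ P := by rw [hPS]; exact hs
            exact ((hPmem s).1 hsP).2
          have hmS : ∀ s ∈ S, φ s m = lam s := fun s hs =>
            (BGaux.mem_act φ lam).1 (hactm ▸ hs)
          have hdiff : ∀ y : Fin n → ℝ, ℓ y - ℓ m = ∑ s ∈ S, c s * (φ s y - lam s) := by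
            intro y
            rw [BGaux.rep_apply φ hrepc, BGaux.rep_apply φ hrepc, ← Finset.sum_sub_distrib]
            apply Finset.sum_congr rfl
            intro s hs
            rw [hmS s hs]
            ring
          have hterm : ∀ s ∈ S, c s * (φ s ystar - lam s) ≤ 0 := by
            intro s hs
            have h1 : φ s ystar ≤ lam s := hyΔ s
            nlinarith [hcpos s hs]
          have hle1 : ℓ ystar ≤ ℓ m := by
            have := Finset.sum_nonpos hterm
            rw [← hdiff] at this
            linarith
          have hle2 : ℓ m ≤ ℓ ystar := by
            have := hymax hmΔ
            simp only [Pi.neg_apply] at this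
            -- this : -ℓ ystar ≤ -ℓ m
            have h' : (-ℓ) ystar ≤ (-ℓ) m := hymax hmΔ
            simp only [LinearMap.neg_apply] at h'
            linarith
          have hzero : ∑ s ∈ S, c s * (φ s ystar - lam s) = 0 := by
            rw [← hdiff]; linarith
          have hall := (Finset.sum_eq_zero_iff_of_nonpos hterm).1 hzero
          have hys : ∀ s ∈ S, φ s ystar = lam s := by
            intro s hs
            rcases mul_eq_zero.1 (hall s hs) with h | h
            · exact absurd h (hc0 s hs)
            · linarith [sub_eq_zero.1 h]
          have hmy : m = ystar :=
            BGaux.eq_of_forall_act φ hspanS (fun s hs => by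
              rw [hmS s hs, hys s hs])
          exact hSne (by rw [← hactm, hmy])
        · rw [Finset.not_nonempty_iff_eq_empty.1 hfe, Finset.sum_empty]
      · intro h
        exact absurd (Finset.mem_univ S₀) h
    rw [hsingle, Set.indicator_of_mem hx, ← mul_pow]
    norm_num
  · -- the exterior case
    rw [Set.indicator_of_notMem hx]
    have hzero : ∀ S : Finset (Fin N),
        ∑ I ∈ 𝒮.filter (fun I => σ I = S), (-1:ℝ)^I.card = 0 := by
      intro S
      by_cases hfe : (𝒮.filter (fun I => σ I = S)).Nonempty
      · obtain ⟨m, c, hmΔ, hactm, hcardS, hspanS, hindS, hrepc, hc0, P, hPmem, hsets⟩ :=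
          hfibstr S hfe
        rw [hsets, BGaux.interval_alt_sum]
        rw [if_neg]
        intro hPS
        have hmS : ∀ s ∈ S, φ s m = lam s := fun s hs =>
          (BGaux.mem_act φ lam).1 (hactm ▸ hs)
        have hterm : ∀ s ∈ S, c s * (φ s x₀ - lam s) ≤ 0 := by
          intro s hs
          by_cases hsA : s ∈ A
          · have h1 : φ s x₀ ≤ lam s := (hmemA s).1 hsA
            have hsP : s ∈ P := by
              rw [hPS]
              exact Finset.mem_inter.2 ⟨hs, hsA⟩
            have h2 : 0 < c s := ((hPmem s).1 hsP).2
            nlinarith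
          · have h1 : lam s < φ s x₀ := not_le.1 (fun hle => hsA ((hmemA s).2 hle))
            have h2 : c s ≤ 0 := by
              by_contra hcp
              push_neg at hcp
              have hsP : s ∈ P := (hPmem s).2 ⟨hs, hcp⟩
              rw [hPS] at hsP
              exact hsA (Finset.mem_inter.1 hsP).2
            nlinarith
        have hdiff : ℓ x₀ - ℓ m = ∑ s ∈ S, c s * (φ s x₀ - lam s) := by
          rw [BGaux.rep_apply φ hrepc, BGaux.rep_apply φ hrepc, ← Finset.sum_sub_distrib]
          apply Finset.sum_congr rfl
          intro s hs
          rw [hmS s hs]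
          ring
        have hsepm : ℓ m ≤ ℓ x₀ := hsep hx m hmΔ
        have hzero' : ∑ s ∈ S, c s * (φ s x₀ - lam s) = 0 := by
          have hle := Finset.sum_nonpos hterm
          rw [← hdiff] at hle ⊢
          linarith
        have hall := (Finset.sum_eq_zero_iff_of_nonpos hterm).1 hzero'
        have hxs : ∀ s ∈ S, φ s x₀ = lam s := by
          intro s hs
          rcases mul_eq_zero.1 (hall s hs) with h | h
          · exact absurd h (hc0 s hs)
          · linarith [sub_eq_zero.1 h]
        have hxm : x₀ = m :=
          BGaux.eq_of_forall_act φ hspanS (fun s hs => by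
            rw [hxs s hs, hmS s hs])
        exact hx (hxm ▸ hmΔ)
      · rw [Finset.not_nonempty_iff_eq_empty.1 hfe, Finset.sum_empty]
    rw [Finset.sum_eq_zero (fun S _ => hzero S), mul_zero]
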